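/- arXiv:2012.04228 — 2 statements merged into one kernel-verified Lean document; each statement's English description precedes it below -/
import Mathlib

section
/- Let D ≥ 1, let L ∈ ℝ^D with L_i > 0 for all i, and let c ∈ ℝ^D. Define u : ℝ^D → ℝ^D by u_i(z) = −c_i · (L_i/π) · (1 + cos(π z_i / L_i)) · ∏_{j ≠ i} sin(π z_j / L_j). Then u is differentiable on the open box ∏_{i=1}^{D} (−L_i, L_i), and for every z in this open box, div u(z) = (Σ_{i=1}^{D} c_i) · ∏_{i=1}^{D} sin(π z_i / L_i). In particular, if Σ_{i=1}^{D} c_i = 0, then div u(z) = 0 for every z in the open box. -/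
open Real

/-- The paper's incompressible-flow field
`uᵢ(z) = -cᵢ (Lᵢ/π) (1 + cos(π zᵢ/Lᵢ)) ∏_{j≠i} sin(π zⱼ/Lⱼ)` is differentiable on the
open box `∏ (-Lᵢ, Lᵢ)` with divergence `(∑ cᵢ) ∏ sin(π zᵢ/Lᵢ)` there; in particular it is
divergence-free on the box whenever `∑ cᵢ = 0`. -/
theorem stmt7 (D : ℕ) (hD : 1 ≤ D) (L c : Fin D → ℝ) (hL : ∀ i, 0 < L i)
    (u : (Fin D → ℝ) → (Fin D → ℝ))
    (hu : ∀ (z : Fin D → ℝ) (i : Fin D),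
      u z i = -c i * (L i / π) * (1 + Real.cos (π * z i / L i)) *
        ∏ j ∈ Finset.univ.erase i, Real.sin (π * z j / L j)) :
    ∀ z : Fin D → ℝ, (∀ i, z i ∈ Set.Ioo (-(L i)) (L i)) →
      DifferentiableAt ℝ u z ∧
      (∑ i, fderiv ℝ u z (Pi.single i 1) i =
        (∑ i, c i) * ∏ i, Real.sin (π * z i / L i)) ∧
      ((∑ i, c i) = 0 → ∑ i, fderiv ℝ u z (Pi.single i 1) i = 0) := by
  have hu' : u = fun w i => -c i * (L i / π) * (1 + Real.cos (π * w i / L i)) *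
      ∏ j ∈ Finset.univ.erase i, Real.sin (π * w j / L j) := by
    funext w i; rw [hu]
  subst hu'
  intro z _hz
  have hπ : (π : ℝ) ≠ 0 := Real.pi_ne_zero
  have hLne : ∀ i, L i ≠ 0 := fun i => (hL i).ne'
  -- derivative of the sine factors
  set S' : Fin D → (Fin D → ℝ) →L[ℝ] ℝ :=
    fun j => (Real.cos (π * z j / L j) * (π * 1 / L j)) • ContinuousLinearMap.proj j with hS'
  have hS : ∀ j, HasFDerivAt (fun w : Fin D → ℝ => Real.sin (π * w j / L j)) (S' j) z := by
    intro j
    have h1 : HasDerivAt (fun t : ℝ => π * t / L j) (π * 1 / L j) (z j) :=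
      ((hasDerivAt_id (z j)).const_mul π).div_const (L j)
    have h2 : HasDerivAt (fun t : ℝ => Real.sin (π * t / L j))
        (Real.cos (π * z j / L j) * (π * 1 / L j)) (z j) :=
      by have := (Real.hasDerivAt_sin (π * z j / L j)).comp (z j) h1; exact this
    exact h2.comp_hasFDerivAt (f := fun w : Fin D → ℝ => w j) z (hasFDerivAt_apply j z)
  -- derivative of the i-th factor
  have hA : ∀ i, HasFDerivAt
      (fun w : Fin D → ℝ => -c i * (L i / π) * (1 + Real.cos (π * w i / L i)))
      (((c i * Real.sin (π * z i / L i)) • ContinuousLinearMap.proj i : (Fin D → ℝ) →L[ℝ] ℝ)) z := by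
    intro i
    have h1 : HasDerivAt (fun t : ℝ => π * t / L i) (π * 1 / L i) (z i) :=
      ((hasDerivAt_id (z i)).const_mul π).div_const (L i)
    have h2 : HasDerivAt (fun t : ℝ => -c i * (L i / π) * (1 + Real.cos (π * t / L i)))
        (-c i * (L i / π) * (0 + -Real.sin (π * z i / L i) * (π * 1 / L i))) (z i) :=
      (((hasDerivAt_const (z i) (1 : ℝ)).add
        ((Real.hasDerivAt_cos (π * z i / L i)).comp (z i) h1))).const_mul _
    have h3 : -c i * (L i / π) * (0 + -Real.sin (π * z i / L i) * (π * 1 / L i))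
        = c i * Real.sin (π * z i / L i) := by
      field_simp [hπ, hLne i]
      ring
    rw [h3] at h2
    exact h2.comp_hasFDerivAt (f := fun w : Fin D → ℝ => w i) z (hasFDerivAt_apply i z)
  -- derivative of the product of sine factors
  set P' : Fin D → (Fin D → ℝ) →L[ℝ] ℝ := fun i =>
    ∑ j ∈ Finset.univ.erase i,
      (∏ k ∈ (Finset.univ.erase i).erase j, Real.sin (π * z k / L k)) • S' j with hP'
  have hP : ∀ i, HasFDerivAt
      (fun w : Fin D → ℝ => ∏ j ∈ Finset.univ.erase i, Real.sin (π * w j / L j)) (P' i) z := by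
    intro i
    exact HasFDerivAt.finset_prod (fun j _ => hS j)
  -- derivative of each component
  set φ : Fin D → (Fin D → ℝ) →L[ℝ] ℝ := fun i =>
    (-c i * (L i / π) * (1 + Real.cos (π * z i / L i))) • P' i +
    (∏ j ∈ Finset.univ.erase i, Real.sin (π * z j / L j)) •
      ((c i * Real.sin (π * z i / L i)) • ContinuousLinearMap.proj i) with hφ
  have hcomp : ∀ i, HasFDerivAt
      (fun w : Fin D → ℝ => -c i * (L i / π) * (1 + Real.cos (π * w i / L i)) *
        ∏ j ∈ Finset.univ.erase i, Real.sin (π * w j / L j)) (φ i) z :=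
    fun i => (hA i).mul (hP i)
  have hU : HasFDerivAt
      (fun (w : Fin D → ℝ) (i : Fin D) =>
        -c i * (L i / π) * (1 + Real.cos (π * w i / L i)) *
          ∏ j ∈ Finset.univ.erase i, Real.sin (π * w j / L j))
      (ContinuousLinearMap.pi φ) z := hasFDerivAt_pi.mpr hcomp
  have hfd := hU.fderiv
  have hval : ∀ i : Fin D,
      fderiv ℝ (fun (w : Fin D → ℝ) (i : Fin D) =>
        -c i * (L i / π) * (1 + Real.cos (π * w i / L i)) *
          ∏ j ∈ Finset.univ.erase i, Real.sin (π * w j / L j)) z (Pi.single i 1) i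
        = c i * ∏ j, Real.sin (π * z j / L j) := by
    intro i
    rw [hfd]
    have hP'zero : P' i (Pi.single i 1) = 0 := by
      rw [hP']
      simp only [ContinuousLinearMap.sum_apply, ContinuousLinearMap.smul_apply, hS',
        ContinuousLinearMap.proj_apply]
      refine Finset.sum_eq_zero fun j hj => ?_
      have hji : j ≠ i := Finset.ne_of_mem_erase hj
      rw [Pi.single_eq_of_ne hji]
      simp
    have : (ContinuousLinearMap.pi φ) (Pi.single i 1) i = φ i (Pi.single i 1) := rfl
    rw [this, hφ]
    simp only [ContinuousLinearMap.add_apply, ContinuousLinearMap.smul_apply,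
      ContinuousLinearMap.proj_apply, hP'zero, Pi.single_eq_same, smul_eq_mul, mul_zero, zero_add,
      mul_one]
    rw [← Finset.mul_prod_erase Finset.univ _ (Finset.mem_univ i)]
    ring
  refine ⟨hU.differentiableAt, ?_, ?_⟩
  · rw [Finset.sum_congr rfl (fun i _ => hval i), ← Finset.sum_mul]
  · intro hc
    rw [Finset.sum_congr rfl (fun i _ => hval i), ← Finset.sum_mul, hc, zero_mul]
end

section
/- Let D ≥ 2. Then there exists a continuous vector field U : ℝ^D → ℝ^D that is not identically zero, vanishes outside a compact set, is differentiable at every point not lying on the boundary of the closed box [−1,1]^D, and satisfies div U(z) = 0 at every such point of differentiability. -/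
open Finset

/-! Auxiliary bump functions: `stmt9g t = (max (1-t^2) 0)^2` is `C^1` with derivative
`stmt9h t = -(4*t) * max (1-t^2) 0` on `|t| < 1`, and both vanish for `|t| ≥ 1`. -/

noncomputable def stmt9g (t : ℝ) : ℝ := (max (1 - t ^ 2) 0) ^ 2
noncomputable def stmt9h (t : ℝ) : ℝ := (-(4 * t)) * max (1 - t ^ 2) 0

lemma stmt9g_cont : Continuous stmt9g := by unfold stmt9g; fun_prop
lemma stmt9h_cont : Continuous stmt9h := by unfold stmt9h; fun_prop

lemma stmt9g_zero {t : ℝ} (ht : 1 ≤ |t|) : stmt9g t = 0 := by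
  have h : 1 - t ^ 2 ≤ 0 := by nlinarith [sq_abs t, abs_nonneg t]
  simp [stmt9g, max_eq_right h]

lemma stmt9h_zero {t : ℝ} (ht : 1 ≤ |t|) : stmt9h t = 0 := by
  have h : 1 - t ^ 2 ≤ 0 := by nlinarith [sq_abs t, abs_nonneg t]
  simp [stmt9h, max_eq_right h]

lemma stmt9_ev {t : ℝ} (ht : |t| < 1) :
    ∀ᶠ s in nhds t, stmt9g s = (1 - s ^ 2) ^ 2 ∧ stmt9h s = (-(4 * s)) * (1 - s ^ 2) := by
  have hopen : IsOpen {s : ℝ | |s| < 1} := isOpen_lt (by fun_prop) continuous_const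
  filter_upwards [hopen.mem_nhds ht] with s hs
  have h : (0 : ℝ) ≤ 1 - s ^ 2 := by
    have := hs
    nlinarith [sq_abs s, abs_nonneg s]
  constructor <;> simp [stmt9g, stmt9h, max_eq_left h]

lemma stmt9g_deriv {t : ℝ} (ht : |t| < 1) : HasDerivAt stmt9g (stmt9h t) t := by
  have hp : HasDerivAt (fun s : ℝ => 1 - s ^ 2) (-(2 * t ^ 1)) t := by
    simpa using (hasDerivAt_pow 2 t).const_sub 1
  have h1 : HasDerivAt (fun s : ℝ => (1 - s ^ 2) ^ 2)
      (2 * (1 - t ^ 2) ^ 1 * (-(2 * t ^ 1))) t := by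
    simpa using hp.fun_pow 2
  have h2 : HasDerivAt stmt9g (2 * (1 - t ^ 2) ^ 1 * (-(2 * t ^ 1))) t :=
    h1.congr_of_eventuallyEq (by filter_upwards [stmt9_ev ht] with s hs using hs.1)
  convert h2 using 1
  have h : (0 : ℝ) ≤ 1 - t ^ 2 := by nlinarith [sq_abs t, abs_nonneg t]
  simp [stmt9h, max_eq_left h]; ring

lemma stmt9h_deriv {t : ℝ} (ht : |t| < 1) : HasDerivAt stmt9h (12 * t ^ 2 - 4) t := by
  have hp : HasDerivAt (fun s : ℝ => 1 - s ^ 2) (-(2 * t ^ 1)) t := by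
    simpa using (hasDerivAt_pow 2 t).const_sub 1
  have hq : HasDerivAt (fun s : ℝ => (-(4 * s))) (-4) t := by
    simpa using ((hasDerivAt_id t).const_mul (4 : ℝ)).fun_neg
  have h1 := hq.mul hp
  have h2 : HasDerivAt stmt9h ((-4) * (1 - t ^ 2) + (-(4 * t)) * (-(2 * t ^ 1))) t :=
    h1.congr_of_eventuallyEq (by filter_upwards [stmt9_ev ht] with s hs using hs.2)
  convert h2 using 1; ring

/-! The vector field built from `stmt9g` and `stmt9h`. -/

noncomputable def stmt9W {D : ℕ} (i j : Fin D) : ℝ → ℝ := if j = i then stmt9h else stmt9g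

noncomputable def stmt9A {D : ℕ} (i : Fin D) (z : Fin D → ℝ) : ℝ := ∏ j, stmt9W i j (z j)

noncomputable def stmt9U {D : ℕ} (i0 i1 : Fin D) (z : Fin D → ℝ) : Fin D → ℝ :=
  fun k => if k = i0 then stmt9A i1 z else if k = i1 then -(stmt9A i0 z) else 0

lemma stmt9W_cont {D : ℕ} (i j : Fin D) : Continuous (stmt9W i j) := by
  unfold stmt9W; split
  · exact stmt9h_cont
  · exact stmt9g_cont

lemma stmt9A_cont {D : ℕ} (i : Fin D) : Continuous (stmt9A i) :=
  continuous_finset_prod _ fun j _ => (stmt9W_cont i j).comp (continuous_apply j)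

lemma stmt9W_zero {D : ℕ} (i j : Fin D) {t : ℝ} (ht : 1 ≤ |t|) : stmt9W i j t = 0 := by
  unfold stmt9W; split
  · exact stmt9h_zero ht
  · exact stmt9g_zero ht

lemma stmt9A_zero {D : ℕ} (i : Fin D) {z : Fin D → ℝ} (j : Fin D) (hj : 1 ≤ |z j|) :
    stmt9A i z = 0 :=
  Finset.prod_eq_zero (Finset.mem_univ j) (stmt9W_zero i j hj)

lemma stmt9U_zero {D : ℕ} (i0 i1 : Fin D) {z : Fin D → ℝ} (j : Fin D) (hj : 1 ≤ |z j|) :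
    stmt9U i0 i1 z = 0 := by
  funext k
  unfold stmt9U
  split_ifs <;> simp [stmt9A_zero _ j hj]

lemma stmt9W_hasDerivAt {D : ℕ} (i j : Fin D) {t : ℝ} (ht : |t| < 1) :
    HasDerivAt (stmt9W i j) (if j = i then 12 * t ^ 2 - 4 else stmt9h t) t := by
  unfold stmt9W; split_ifs
  · exact stmt9h_deriv ht
  · exact stmt9g_deriv ht

/-- Candidate total derivative of `stmt9A i` at an interior point. -/
noncomputable def stmt9L {D : ℕ} (i : Fin D) (z : Fin D → ℝ) : (Fin D → ℝ) →L[ℝ] ℝ :=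
  ∑ m, (∏ k ∈ Finset.univ.erase m, stmt9W i k (z k)) •
    ((if m = i then 12 * (z m) ^ 2 - 4 else stmt9h (z m)) •
      ContinuousLinearMap.proj (R := ℝ) (φ := fun _ : Fin D => ℝ) m)

lemma stmt9A_hasFDerivAt {D : ℕ} (i : Fin D) {z : Fin D → ℝ} (hz : ∀ j, |z j| < 1) :
    HasFDerivAt (stmt9A i) (stmt9L i z) z := by
  have h := HasFDerivAt.finset_prod (u := Finset.univ)
    (g := fun j (z : Fin D → ℝ) => stmt9W i j (z j))
    (g' := fun j => (if j = i then 12 * (z j) ^ 2 - 4 else stmt9h (z j)) •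
      ContinuousLinearMap.proj (R := ℝ) (φ := fun _ : Fin D => ℝ) j)
    (fun j _ => (stmt9W_hasDerivAt i j (hz j)).comp_hasFDerivAt z
      ((ContinuousLinearMap.proj (R := ℝ) (φ := fun _ : Fin D => ℝ) j).hasFDerivAt))
  exact h

lemma stmt9L_apply {D : ℕ} (i : Fin D) (z : Fin D → ℝ) (j : Fin D) (hj : j ≠ i) :
    stmt9L i z (Pi.single j 1)
      = (∏ k ∈ Finset.univ.erase j, stmt9W i k (z k)) * stmt9h (z j) := by
  unfold stmt9L
  rw [ContinuousLinearMap.sum_apply, Finset.sum_eq_single j]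
  · simp [hj]
  · intro m _ hm
    split_ifs <;> simp [Pi.single_eq_of_ne hm]
  · simp

lemma stmt9_cross {D : ℕ} (i0 i1 : Fin D) (hne : i0 ≠ i1) (z : Fin D → ℝ) :
    (∏ k ∈ Finset.univ.erase i0, stmt9W i1 k (z k)) * stmt9h (z i0)
      = (∏ k ∈ Finset.univ.erase i1, stmt9W i0 k (z k)) * stmt9h (z i1) := by
  have h1 : i1 ∈ Finset.univ.erase i0 := by simp [hne.symm]
  have h2 : i0 ∈ Finset.univ.erase i1 := by simp [hne]
  rw [← Finset.mul_prod_erase _ _ h1, ← Finset.mul_prod_erase _ _ h2]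
  have e1 : ∏ k ∈ (Finset.univ.erase i0).erase i1, stmt9W i1 k (z k)
      = ∏ k ∈ (Finset.univ.erase i0).erase i1, stmt9g (z k) :=
    Finset.prod_congr rfl fun k hk => by
      simp only [Finset.mem_erase] at hk
      simp [stmt9W, hk.1]
  have e2 : ∏ k ∈ (Finset.univ.erase i1).erase i0, stmt9W i0 k (z k)
      = ∏ k ∈ (Finset.univ.erase i1).erase i0, stmt9g (z k) :=
    Finset.prod_congr rfl fun k hk => by
      simp only [Finset.mem_erase] at hk
      simp [stmt9W, hk.1]
  rw [e1, e2, Finset.erase_right_comm]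
  simp only [stmt9W, if_true, eq_self_iff_true]
  ring

lemma stmt9_notmem {D : ℕ} {z : Fin D → ℝ} (hz : z ∉ Set.Icc (-1 : Fin D → ℝ) 1) :
    ∃ j, 1 < |z j| := by
  rw [Set.mem_Icc, not_and_or] at hz
  rcases hz with h | h
  · rw [Pi.le_def, not_forall] at h
    obtain ⟨j, hj⟩ := h
    have hlt : z j < -1 := by simpa using lt_of_not_ge hj
    exact ⟨j, by rw [lt_abs]; right; linarith⟩
  · rw [Pi.le_def, not_forall] at h
    obtain ⟨j, hj⟩ := h
    have hlt : 1 < z j := by simpa using lt_of_not_ge hj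
    exact ⟨j, by rw [lt_abs]; left; linarith⟩

/-- For `D ≥ 2` there exists a continuous, not identically zero, compactly supported
vector field `U : ℝ^D → ℝ^D` which is differentiable off the boundary of the box
`[-1,1]^D` and divergence-free at every point of differentiability. -/
theorem stmt9 (D : ℕ) (hD : 2 ≤ D) :
    ∃ U : (Fin D → ℝ) → (Fin D → ℝ), Continuous U ∧ U ≠ 0 ∧
      (∃ K : Set (Fin D → ℝ), IsCompact K ∧ ∀ z ∉ K, U z = 0) ∧
      ∀ z ∉ frontier (Set.Icc (-1 : Fin D → ℝ) 1),
        DifferentiableAt ℝ U z ∧ ∑ i, fderiv ℝ U z (Pi.single i 1) i = 0 := by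
  classical
  set i0 : Fin D := ⟨0, by omega⟩ with hi0def
  set i1 : Fin D := ⟨1, by omega⟩ with hi1def
  have hne : i0 ≠ i1 := by simp [hi0def, hi1def, Fin.ext_iff]
  refine ⟨stmt9U i0 i1, ?_, ?_, ?_, ?_⟩
  · -- continuity
    refine continuous_pi fun k => ?_
    unfold stmt9U
    split_ifs
    · exact stmt9A_cont i1
    · exact (stmt9A_cont i0).neg
    · exact continuous_const
  · -- nonvanishing
    intro h0
    have hz : stmt9U i0 i1 (Pi.single i0 (1/2 : ℝ)) i1 = 0 := by rw [h0]; rfl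
    have hA : stmt9A i0 (Pi.single i0 (1/2 : ℝ)) = -(3/2 : ℝ) := by
      unfold stmt9A
      rw [Finset.prod_eq_single i0]
      · rw [Pi.single_eq_same]
        norm_num [stmt9W, stmt9h]
      · intro j _ hj
        rw [Pi.single_eq_of_ne hj]
        norm_num [stmt9W, hj, stmt9g]
      · simp
    rw [show stmt9U i0 i1 (Pi.single i0 (1/2 : ℝ)) i1
        = -(stmt9A i0 (Pi.single i0 (1/2 : ℝ))) by
      unfold stmt9U; rw [if_neg hne.symm, if_pos rfl]] at hz
    rw [hA] at hz
    norm_num at hz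
  · -- compact support
    refine ⟨Set.Icc (-1) 1, isCompact_Icc, fun z hz => ?_⟩
    obtain ⟨j, hj⟩ := stmt9_notmem hz
    exact stmt9U_zero i0 i1 j hj.le
  · -- differentiability and divergence
    intro z hz
    rw [isClosed_Icc.frontier_eq] at hz
    by_cases hmem : z ∈ Set.Icc (-1 : Fin D → ℝ) 1
    · -- interior case
      have hint : z ∈ interior (Set.Icc (-1 : Fin D → ℝ) 1) := by
        by_contra h
        exact hz ⟨hmem, h⟩
      have hzj : ∀ j, |z j| < 1 := by
        intro j
        rw [← Set.pi_univ_Icc, interior_pi_set Set.finite_univ] at hint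
        have := Set.mem_univ_pi.mp hint j
        simp only [Pi.neg_apply, Pi.one_apply, interior_Icc, Set.mem_Ioo] at this
        rw [abs_lt]; exact this
      have hdA : ∀ i : Fin D, HasFDerivAt (stmt9A i) (stmt9L i z) z :=
        fun i => stmt9A_hasFDerivAt i hzj
      -- component derivatives
      set F : Fin D → (Fin D → ℝ) →L[ℝ] ℝ := fun k =>
        if k = i0 then stmt9L i1 z else if k = i1 then -(stmt9L i0 z) else 0 with hF
      have hcomp : ∀ k, HasFDerivAt (fun w => stmt9U i0 i1 w k) (F k) z := by
        intro k
        rcases eq_or_ne k i0 with rfl | hk0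
        · simpa [stmt9U, hF] using hdA i1
        · rcases eq_or_ne k i1 with rfl | hk1
          · simpa [stmt9U, hF, hk0] using (hdA i0).fun_neg
          · simp only [stmt9U, hF, if_neg hk0, if_neg hk1]
            exact hasFDerivAt_const 0 z
      have hUd : HasFDerivAt (stmt9U i0 i1) (ContinuousLinearMap.pi F) z :=
        hasFDerivAt_pi.mpr hcomp
      refine ⟨hUd.differentiableAt, ?_⟩
      rw [hUd.fderiv]
      have hterm : ∀ i : Fin D,
          (ContinuousLinearMap.pi F) (Pi.single i 1) i = F i (Pi.single i 1) := by
        intro i; rw [ContinuousLinearMap.pi_apply]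
      simp only [hterm]
      rw [Finset.sum_eq_add_sum_sdiff_singleton_of_mem (Finset.mem_univ i0)
        (fun i => F i (Pi.single i 1))]
      rw [Finset.sum_eq_add_sum_sdiff_singleton_of_mem
        (show i1 ∈ Finset.univ \ {i0} by simp [hne.symm])
        (fun i => F i (Pi.single i 1))]
      have hrest : ∑ i ∈ (Finset.univ \ {i0}) \ {i1}, F i (Pi.single i 1) = 0 := by
        refine Finset.sum_eq_zero fun i hi => ?_
        simp only [Finset.mem_sdiff, Finset.mem_singleton] at hi
        simp [hF, hi.1.2, hi.2]
      rw [hrest]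
      have hF0 : F i0 = stmt9L i1 z := by simp [hF]
      have hF1 : F i1 = -(stmt9L i0 z) := by simp [hF, Ne.symm hne]
      have h0 : F i0 (Pi.single i0 1)
          = (∏ k ∈ Finset.univ.erase i0, stmt9W i1 k (z k)) * stmt9h (z i0) := by
        rw [hF0]; exact stmt9L_apply i1 z i0 hne
      have h1 : F i1 (Pi.single i1 1)
          = -((∏ k ∈ Finset.univ.erase i1, stmt9W i0 k (z k)) * stmt9h (z i1)) := by
        rw [hF1, ContinuousLinearMap.neg_apply, stmt9L_apply i0 z i1 (Ne.symm hne)]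
      rw [h0, h1, stmt9_cross i0 i1 hne z]
      ring
    · -- exterior case
      obtain ⟨j, hj⟩ := stmt9_notmem hmem
      have hopen : IsOpen {w : Fin D → ℝ | 1 < |w j|} :=
        isOpen_lt continuous_const ((continuous_apply j).abs)
      have heq : stmt9U i0 i1 =ᶠ[nhds z] (fun _ => 0) := by
        filter_upwards [hopen.mem_nhds hj] with w hw
        exact stmt9U_zero i0 i1 j (le_of_lt hw)
      refine ⟨(differentiableAt_const 0).congr_of_eventuallyEq heq, ?_⟩
      rw [heq.fderiv_eq, fderiv_fun_const]
      simp
end
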